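/- arXiv:1912.05938 — 3 statements merged into one kernel-verified Lean document; each statement's English description precedes it below -/
import Mathlib

section
/- Let n ≥ 1 and ε = (ε_{ij}) an n×n skew-symmetric integer matrix defining a Poisson bracket {X_i, X_j} = ε_{ij}·X_i·X_j on functions of (ℂ*)^n. Fix k and define new variables X'_k = X_k^{-1} and X'_j = X_j·(1 + X_k^{-sgn(ε_{jk})})^{-ε_{jk}} for j ≠ k. Then the new variables satisfy {X'_i, X'_j} = ε'_{ij}·X'_i·X'_j, where ε' is the mutated exchange matrix ε'_{ij} = -ε_{ij} if k ∈ {i,j} and ε'_{ij} = ε_{ij} + max(ε_{ik},0)max(ε_{kj},0) - max(-ε_{ik},0)max(-ε_{kj},0) otherwise. In other words, cluster Poisson mutation is a Poisson map. -/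
/-- The cluster Poisson mutation at index k: the j-th new coordinate as a function
on the torus (ℂ*)ⁿ. -/
noncomputable def clusterMut (n : ℕ) (ε : Matrix (Fin n) (Fin n) ℤ) (k j : Fin n) :
    (Fin n → ℂ) → ℂ := fun X =>
  if j = k then (X k)⁻¹
  else X j * (1 + X k ^ (-(Int.sign (ε j k)))) ^ (-(ε j k))

lemma fderiv_clusterMut_k (n : ℕ) (ε : Matrix (Fin n) (Fin n) ℤ) (k : Fin n)
    (X : Fin n → ℂ) (hX : X k ≠ 0) (i : Fin n) :
    fderiv ℂ (clusterMut n ε k k) X (Pi.single i 1) =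
      (-(X k ^ 2)⁻¹) * (if i = k then 1 else 0) := by
  have hproj : HasFDerivAt (fun X : Fin n → ℂ => X k)
      (ContinuousLinearMap.proj k : (Fin n → ℂ) →L[ℂ] ℂ) X :=
    (ContinuousLinearMap.proj (R := ℂ) (φ := fun _ : Fin n => ℂ) k).hasFDerivAt
  have h : HasFDerivAt (fun X : Fin n → ℂ => (X k)⁻¹)
      ((-(X k ^ 2)⁻¹) • (ContinuousLinearMap.proj k : (Fin n → ℂ) →L[ℂ] ℂ)) X :=
    (hasDerivAt_inv hX).comp_hasFDerivAt X hproj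
  have hfun : clusterMut n ε k k = fun X : Fin n → ℂ => (X k)⁻¹ := by
    funext Y; simp [clusterMut]
  rw [hfun, h.fderiv]
  rcases eq_or_ne i k with h2|h2 <;>
    simp [ContinuousLinearMap.proj, Pi.single_apply, h2, Ne.symm, eq_comm]

lemma fderiv_clusterMut_ne (n : ℕ) (ε : Matrix (Fin n) (Fin n) ℤ) (k a : Fin n)
    (X : Fin n → ℂ) (hX : X k ≠ 0)
    (hu : 1 + X k ^ (-(Int.sign (ε a k))) ≠ 0) (ha : a ≠ k) (i : Fin n) :
    fderiv ℂ (clusterMut n ε k a) X (Pi.single i 1) =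
      (1 + X k ^ (-(Int.sign (ε a k)))) ^ (-(ε a k)) * (if i = a then 1 else 0)
      + X a * (((-(ε a k) : ℤ) : ℂ) * (1 + X k ^ (-(Int.sign (ε a k)))) ^ (-(ε a k) - 1)
          * (((-(Int.sign (ε a k)) : ℤ) : ℂ) * X k ^ (-(Int.sign (ε a k)) - 1)))
        * (if i = k then 1 else 0) := by
  have hproj : ∀ c : Fin n, HasFDerivAt (fun X : Fin n → ℂ => X c)
      (ContinuousLinearMap.proj c : (Fin n → ℂ) →L[ℂ] ℂ) X := fun c =>
    (ContinuousLinearMap.proj (R := ℂ) (φ := fun _ : Fin n => ℂ) c).hasFDerivAt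
  have hinner : HasFDerivAt (fun X : Fin n → ℂ => 1 + X k ^ (-(Int.sign (ε a k))))
      (((((-(Int.sign (ε a k)) : ℤ) : ℂ) * X k ^ (-(Int.sign (ε a k)) - 1))) •
        (ContinuousLinearMap.proj k : (Fin n → ℂ) →L[ℂ] ℂ)) X := by
    have := (hasDerivAt_zpow (-(Int.sign (ε a k))) (X k) (Or.inl hX)).comp_hasFDerivAt X (hproj k)
    exact (this.const_add 1)
  have houter : HasFDerivAt (fun X : Fin n → ℂ =>
      (1 + X k ^ (-(Int.sign (ε a k)))) ^ (-(ε a k)))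
      (((((-(ε a k) : ℤ) : ℂ) * (1 + X k ^ (-(Int.sign (ε a k)))) ^ (-(ε a k) - 1))) •
        (((((-(Int.sign (ε a k)) : ℤ) : ℂ) * X k ^ (-(Int.sign (ε a k)) - 1))) •
          (ContinuousLinearMap.proj k : (Fin n → ℂ) →L[ℂ] ℂ))) X :=
    by have := (hasDerivAt_zpow (-(ε a k)) _ (Or.inl hu)).comp_hasFDerivAt X hinner; exact this
  have hmul := (hproj a).mul houter
  have hfun : clusterMut n ε k a = fun X : Fin n → ℂ =>
      X a * (1 + X k ^ (-(Int.sign (ε a k)))) ^ (-(ε a k)) := by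
    funext Y; simp [clusterMut, ha]
  rw [hfun, HasFDerivAt.fderiv (f := fun X : Fin n → ℂ =>
      X a * (1 + X k ^ (-(Int.sign (ε a k)))) ^ (-(ε a k))) hmul]
  simp only [ContinuousLinearMap.add_apply, ContinuousLinearMap.smul_apply,
    ContinuousLinearMap.proj_apply, Pi.single_apply, smul_eq_mul]
  rcases eq_or_ne i a with h|h <;> rcases eq_or_ne i k with h2|h2
  · exact absurd (h ▸ h2) ha
  · simp [h, ha, Ne.symm ha, h2, Ne.symm h2]
  · simp [h2, ha, Ne.symm ha, Ne.symm h]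
  · simp [Ne.symm h, Ne.symm h2, h, h2]

lemma sum_delta_aux (m : ℕ) (c : Fin m → Fin m → ℂ) (Pa Qa Pb Qb : ℂ) (a b k : Fin m) :
    ∑ i : Fin m, ∑ j : Fin m, c i j
        * (Pa * (if i = a then 1 else 0) + Qa * (if i = k then 1 else 0))
        * (Pb * (if j = b then 1 else 0) + Qb * (if j = k then 1 else 0))
      = c a b * Pa * Pb + c a k * Pa * Qb + c k b * Qa * Pb + c k k * Qa * Qb := by
  simp only [mul_add, add_mul, mul_ite, ite_mul, mul_one, mul_zero, one_mul, zero_mul,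
    add_zero, zero_add, Finset.sum_add_distrib, Finset.sum_ite_irrel, Finset.sum_ite_eq',
    Finset.mem_univ, if_true, Finset.sum_const_zero]
  ring

/-- cluster Poisson mutation is a Poisson map: with the log-canonical
bracket {f,g}(X) = Σ_{i,j} ε_{ij} X_i X_j (∂f/∂X_i)(∂g/∂X_j), the mutated
coordinates X'_a satisfy {X'_a, X'_b} = ε'_{ab}·X'_a·X'_b, where ε' is the
Fomin–Zelevinsky mutation of ε at k. -/
theorem cluster_mutation_is_poisson
    (n : ℕ) (hn : 1 ≤ n)
    (ε : Matrix (Fin n) (Fin n) ℤ) (hskew : ∀ i j, ε i j = - ε j i)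
    (k : Fin n)
    (ε' : Matrix (Fin n) (Fin n) ℤ)
    (hε' : ∀ i j, ε' i j =
      if i = k ∨ j = k then - ε i j
      else ε i j + max (ε i k) 0 * max (ε k j) 0 - max (- ε i k) 0 * max (- ε k j) 0)
    (X : Fin n → ℂ) (hX : ∀ j, X j ≠ 0)
    (h1 : ∀ j, 1 + X k ^ (-(Int.sign (ε j k))) ≠ 0)
    (a b : Fin n) :
    ∑ i : Fin n, ∑ j : Fin n, (ε i j : ℂ) * X i * X j
        * fderiv ℂ (clusterMut n ε k a) X (Pi.single i 1)
        * fderiv ℂ (clusterMut n ε k b) X (Pi.single j 1)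
      = (ε' a b : ℂ) * clusterMut n ε k a X * clusterMut n ε k b X := by
  classical
  have hkk : ε k k = 0 := by have := hskew k k; omega
  set P : Fin n → ℂ := fun c => if c = k then 0
      else (1 + X k ^ (-(Int.sign (ε c k)))) ^ (-(ε c k)) with hPdef
  set Q : Fin n → ℂ := fun c => if c = k then -(X k ^ 2)⁻¹
      else X c * (((-(ε c k) : ℤ) : ℂ) * (1 + X k ^ (-(Int.sign (ε c k)))) ^ (-(ε c k) - 1)
          * (((-(Int.sign (ε c k)) : ℤ) : ℂ) * X k ^ (-(Int.sign (ε c k)) - 1))) with hQdef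
  have hD : ∀ c i, fderiv ℂ (clusterMut n ε k c) X (Pi.single i 1)
      = P c * (if i = c then 1 else 0) + Q c * (if i = k then 1 else 0) := by
    intro c i
    by_cases hc : c = k
    · rw [hc]
      rw [fderiv_clusterMut_k n ε k X (hX k) i]
      simp [hPdef, hQdef]
    · rw [fderiv_clusterMut_ne n ε k c X (hX k) (h1 c) hc i]
      simp [hPdef, hQdef, hc]
  simp only [hD]
  rw [sum_delta_aux n (fun i j => (ε i j : ℂ) * X i * X j) (P a) (Q a) (P b) (Q b) a b k]
  rw [hkk]
  by_cases hak : a = k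
  · by_cases hbk : b = k
    · rw [hak, hbk, hε' k k, hkk]
      simp [hPdef]
    · rw [hak, hε' k b, if_pos (Or.inl rfl)]
      simp only [hPdef, hQdef, clusterMut, if_pos rfl, if_neg hbk, hkk]
      push_cast
      have h2 : X k * (X k)⁻¹ = 1 := mul_inv_cancel₀ (hX k)
      linear_combination (-(↑(ε k b) : ℂ) * X b * (X k)⁻¹
        * (1 + X k ^ (-(ε b k).sign)) ^ (-ε b k)) * h2
  · by_cases hbk : b = k
    · rw [hbk, hε' a k, if_pos (Or.inr rfl)]
      simp only [hPdef, hQdef, clusterMut, if_pos rfl, if_neg hak, hkk]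
      push_cast
      have h2 : X k * (X k)⁻¹ = 1 := mul_inv_cancel₀ (hX k)
      linear_combination (-(↑(ε a k) : ℂ) * X a * (X k)⁻¹
        * (1 + X k ^ (-(ε a k).sign)) ^ (-ε a k)) * h2
    · rw [hε' a b, if_neg (by push_neg; exact ⟨hak, hbk⟩)]
      simp only [hPdef, hQdef, clusterMut, if_neg hak, if_neg hbk, hkk]
      have hkb : ε k b = - ε b k := hskew k b
      rcases lt_trichotomy (ε a k) 0 with ha|ha|ha <;>
        rcases lt_trichotomy (ε b k) 0 with hb|hb|hb
      · -- ε a k < 0, ε b k < 0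
        have hsa : (ε a k).sign = -1 := Int.sign_eq_neg_one_of_neg ha
        have hsb : (ε b k).sign = -1 := Int.sign_eq_neg_one_of_neg hb
        have hE : ε a b + max (ε a k) 0 * max (ε k b) 0
            - max (- ε a k) 0 * max (- ε k b) 0 = ε a b := by
          rw [hkb, max_eq_right ha.le, zero_mul,
            max_eq_right (show -(-ε b k) ≤ 0 by omega), mul_zero]; ring
        rw [hE, hkb, hsa, hsb]
        have hv : (1:ℂ) + X k ≠ 0 := by
          have := h1 b; rwa [hsb, show (-(-1:ℤ)) = 1 by norm_num, zpow_one] at this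
        rw [show (-(-1:ℤ)) = 1 by norm_num]
        simp only [zpow_one, Int.cast_neg, Int.cast_one]
        rw [zpow_sub_one₀ hv, zpow_sub_one₀ hv]
        push_cast
        norm_num
        ring
      · -- ε a k < 0, ε b k = 0
        have hE : ε a b + max (ε a k) 0 * max (ε k b) 0
            - max (- ε a k) 0 * max (- ε k b) 0 = ε a b := by
          rw [hkb, hb]; simp
        rw [hE, hkb, hb]
        push_cast [Int.sign_zero]
        norm_num
        ring
      · -- ε a k < 0, ε b k > 0 : mixed case
        have hsa : (ε a k).sign = -1 := Int.sign_eq_neg_one_of_neg ha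
        have hsb : (ε b k).sign = 1 := Int.sign_eq_one_of_pos hb
        have hE : ε a b + max (ε a k) 0 * max (ε k b) 0
            - max (- ε a k) 0 * max (- ε k b) 0 = ε a b + ε a k * ε b k := by
          rw [hkb, max_eq_right ha.le, zero_mul, neg_neg,
            max_eq_left (show (0:ℤ) ≤ -ε a k by omega),
            max_eq_left (show (0:ℤ) ≤ ε b k by omega)]; ring
        have hv : (1:ℂ) + X k ≠ 0 := by
          have := h1 a; rwa [hsa, show (-(-1:ℤ)) = 1 by norm_num, zpow_one] at this
        have hu : (1:ℂ) + (X k)⁻¹ ≠ 0 := by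
          have := h1 b; rwa [hsb, show (-(1:ℤ)) = -1 by norm_num, zpow_neg_one] at this
        rw [hE, hkb, hsa, hsb]
        rw [show (-(-1:ℤ)) = 1 by norm_num, show (-(1:ℤ)) = -1 by norm_num,
          show ((1:ℤ) - 1) = 0 by norm_num, show ((-1:ℤ) - 1) = -2 by norm_num]
        simp only [zpow_one, zpow_zero, zpow_neg_one]
        rw [zpow_sub_one₀ hv, zpow_sub_one₀ hu]
        push_cast
        rw [show (X k : ℂ) ^ (-2:ℤ) = (X k)⁻¹ * (X k)⁻¹ by
          rw [show (-2:ℤ) = -1 + -1 by norm_num, zpow_add₀ (hX k), zpow_neg_one]]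
        have e1 : (1 + (X k)⁻¹) * (1 + (X k)⁻¹)⁻¹ = 1 := mul_inv_cancel₀ hu
        have e2 : (1 + X k) * (1 + X k)⁻¹ = 1 := mul_inv_cancel₀ hv
        have e3 : X k * (X k)⁻¹ = 1 := mul_inv_cancel₀ (hX k)
        linear_combination ((↑(ε a k) : ℂ) * ↑(ε b k) * X a * X b
            * (1 + X k) ^ (-ε a k) * (1 + (X k)⁻¹) ^ (-ε b k)) *
          ((1 + X k)⁻¹ * e1 + (1 - (X k)⁻¹ * (1 + (X k)⁻¹)⁻¹) * e2
            + ((X k)⁻¹ * (1 + (X k)⁻¹)⁻¹ + (1 + (X k)⁻¹)⁻¹ * (1 + X k)⁻¹) * e3)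
      · -- ε a k = 0
        have hE : ε a b + max (ε a k) 0 * max (ε k b) 0
            - max (- ε a k) 0 * max (- ε k b) 0 = ε a b := by
          rw [ha]; simp
        rw [hE, ha]
        push_cast [Int.sign_zero]
        norm_num
        ring
      · have hE : ε a b + max (ε a k) 0 * max (ε k b) 0
            - max (- ε a k) 0 * max (- ε k b) 0 = ε a b := by
          rw [ha]; simp
        rw [hE, ha]
        push_cast [Int.sign_zero]
        norm_num
        ring
      · have hE : ε a b + max (ε a k) 0 * max (ε k b) 0
            - max (- ε a k) 0 * max (- ε k b) 0 = ε a b := by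
          rw [ha]; simp
        rw [hE, ha]
        push_cast [Int.sign_zero]
        norm_num
        ring
      · -- ε a k > 0, ε b k < 0 : mixed case
        have hsa : (ε a k).sign = 1 := Int.sign_eq_one_of_pos ha
        have hsb : (ε b k).sign = -1 := Int.sign_eq_neg_one_of_neg hb
        have hE : ε a b + max (ε a k) 0 * max (ε k b) 0
            - max (- ε a k) 0 * max (- ε k b) 0 = ε a b - ε a k * ε b k := by
          rw [hkb, neg_neg, max_eq_right (show -ε a k ≤ 0 by omega), zero_mul,
            max_eq_left (show (0:ℤ) ≤ ε a k by omega),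
            max_eq_left (show (0:ℤ) ≤ -ε b k by omega)]; ring
        have hu : (1:ℂ) + (X k)⁻¹ ≠ 0 := by
          have := h1 a; rwa [hsa, show (-(1:ℤ)) = -1 by norm_num, zpow_neg_one] at this
        have hv : (1:ℂ) + X k ≠ 0 := by
          have := h1 b; rwa [hsb, show (-(-1:ℤ)) = 1 by norm_num, zpow_one] at this
        rw [hE, hkb, hsa, hsb]
        rw [show (-(-1:ℤ)) = 1 by norm_num, show (-(1:ℤ)) = -1 by norm_num,
          show ((1:ℤ) - 1) = 0 by norm_num, show ((-1:ℤ) - 1) = -2 by norm_num]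
        simp only [zpow_one, zpow_zero, zpow_neg_one]
        rw [zpow_sub_one₀ hu, zpow_sub_one₀ hv]
        push_cast
        have e1 : (1 + (X k)⁻¹) * (1 + (X k)⁻¹)⁻¹ = 1 := mul_inv_cancel₀ hu
        have e2 : (1 + X k) * (1 + X k)⁻¹ = 1 := mul_inv_cancel₀ hv
        have e3 : X k * (X k)⁻¹ = 1 := mul_inv_cancel₀ (hX k)
        rw [show (X k : ℂ) ^ (-2:ℤ) = (X k)⁻¹ * (X k)⁻¹ by
          rw [show (-2:ℤ) = -1 + -1 by norm_num, zpow_add₀ (hX k), zpow_neg_one]]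
        linear_combination (-(↑(ε a k) : ℂ) * ↑(ε b k) * X a * X b
            * (1 + (X k)⁻¹) ^ (-ε a k) * (1 + X k) ^ (-ε b k)) *
          ((1 + X k)⁻¹ * e1 + (1 - (X k)⁻¹ * (1 + (X k)⁻¹)⁻¹) * e2
            + ((X k)⁻¹ * (1 + (X k)⁻¹)⁻¹ + (1 + (X k)⁻¹)⁻¹ * (1 + X k)⁻¹) * e3)
      · -- ε a k > 0, ε b k = 0
        have hE : ε a b + max (ε a k) 0 * max (ε k b) 0
            - max (- ε a k) 0 * max (- ε k b) 0 = ε a b := by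
          rw [hkb, hb]; simp
        rw [hE, hkb, hb]
        push_cast [Int.sign_zero]
        norm_num
        ring
      · -- ε a k > 0, ε b k > 0
        have hsa : (ε a k).sign = 1 := Int.sign_eq_one_of_pos ha
        have hsb : (ε b k).sign = 1 := Int.sign_eq_one_of_pos hb
        have hE : ε a b + max (ε a k) 0 * max (ε k b) 0
            - max (- ε a k) 0 * max (- ε k b) 0 = ε a b := by
          rw [hkb, max_eq_right (show -ε b k ≤ 0 by omega), mul_zero,
            max_eq_right (show -ε a k ≤ 0 by omega), zero_mul]; ring
        have hu : (1:ℂ) + (X k)⁻¹ ≠ 0 := by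
          have := h1 a; rwa [hsa, show (-(1:ℤ)) = -1 by norm_num, zpow_neg_one] at this
        rw [hE, hkb, hsa, hsb]
        rw [show (-(1:ℤ)) = -1 by norm_num, show ((-1:ℤ) - 1) = -2 by norm_num]
        simp only [zpow_neg_one]
        rw [zpow_sub_one₀ hu, zpow_sub_one₀ hu]
        push_cast
        ring
end

section
/- Let U ⊆ ℂ be open and connected and let M : U → Mat₂(ℂ) and λ : U → ℂ be holomorphic maps such that for every η ∈ U, λ(η) is an eigenvalue of M(η), and such that M(η) - λ(η)·I is not identically zero on U (i.e. the entries a(η), b(η), c(η), d(η) of M(η) - λ(η)I do not all vanish identically). Then there exists a holomorphic map ℓ : U → ℙ¹(ℂ) such that for every η with M(η) ≠ λ(η)·I, the point ℓ(η) spans the λ(η)-eigenspace of M(η). In particular the eigenline, defined a priori only on a dense open subset, extends holomorphically across the exceptional points. -/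
open Filter Topology Set

lemma aux_cross (B : Matrix (Fin 2) (Fin 2) ℂ) (x y : Fin 2 → ℂ) (hB : B ≠ 0)
    (hx : B.mulVec x = 0) (hy : B.mulVec y = 0) :
    x 0 * y 1 - x 1 * y 0 = 0 := by
  have hx0 := congrFun hx 0
  have hx1 := congrFun hx 1
  have hy0 := congrFun hy 0
  have hy1 := congrFun hy 1
  simp [Matrix.mulVec, dotProduct, Fin.sum_univ_two] at hx0 hx1 hy0 hy1
  have hB' : ∃ i j, B i j ≠ 0 := by
    by_contra h
    push_neg at h
    exact hB (by ext i j; exact h i j)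
  obtain ⟨i, j, hij⟩ := hB'
  fin_cases i <;> fin_cases j
  · exact (mul_eq_zero.mp (show B 0 0 * (x 0 * y 1 - x 1 * y 0) = 0 by
      linear_combination y 1 * hx0 - x 1 * hy0)).resolve_left hij
  · exact (mul_eq_zero.mp (show B 0 1 * (x 0 * y 1 - x 1 * y 0) = 0 by
      linear_combination x 0 * hy0 - y 0 * hx0)).resolve_left hij
  · exact (mul_eq_zero.mp (show B 1 0 * (x 0 * y 1 - x 1 * y 0) = 0 by
      linear_combination y 1 * hx1 - x 1 * hy1)).resolve_left hij
  · exact (mul_eq_zero.mp (show B 1 1 * (x 0 * y 1 - x 1 * y 0) = 0 by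
      linear_combination x 0 * hy1 - y 0 * hx1)).resolve_left hij

lemma aux_mk (x y : Fin 2 → ℂ) (hx : x ≠ 0) (hy : y ≠ 0)
    (h : x 0 * y 1 - x 1 * y 0 = 0) :
    Projectivization.mk ℂ x hx = Projectivization.mk ℂ y hy := by
  rw [Projectivization.mk_eq_mk_iff']
  by_cases h0 : y 0 = 0
  · have h1 : y 1 ≠ 0 := by
      intro h1
      exact hy (by ext i; fin_cases i <;> simp [h0, h1])
    refine ⟨x 1 / y 1, ?_⟩
    ext i
    fin_cases i <;> simp [Pi.smul_apply, smul_eq_mul, h0]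
    · have : x 0 * y 1 = 0 := by linear_combination h + x 1 * h0
      exact ((mul_eq_zero.mp this).resolve_right h1).symm
    · field_simp
  · refine ⟨x 0 / y 0, ?_⟩
    ext i
    fin_cases i <;> simp [Pi.smul_apply, smul_eq_mul]
    · field_simp
    · field_simp
      linear_combination h

/-- holomorphic extension of the eigenline.  Let U ⊆ ℂ be open and
connected, M : U → Mat₂(ℂ) and λ : U → ℂ holomorphic with λ(η) an eigenvalue of
M(η) for all η ∈ U, and M - λI not identically zero on U.  Then there is a map
ℓ : U → ℙ¹(ℂ) which is holomorphic (locally on U it admits a nonvanishing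
holomorphic lift to ℂ² ∖ {0}) and which spans the λ(η)-eigenspace of M(η) at
every η ∈ U with M(η) ≠ λ(η)·I. -/
theorem eigenline_extends_holomorphically
    (U : Set ℂ) (hU : IsOpen U) (hUconn : IsConnected U)
    (M : ℂ → Matrix (Fin 2) (Fin 2) ℂ) (lam : ℂ → ℂ)
    (hM : ∀ i j, DifferentiableOn ℂ (fun η => M η i j) U)
    (hlam : DifferentiableOn ℂ lam U)
    (heig : ∀ η ∈ U, ∃ v : Fin 2 → ℂ, v ≠ 0 ∧ (M η).mulVec v = lam η • v)
    (hne : ∃ η ∈ U, M η ≠ lam η • (1 : Matrix (Fin 2) (Fin 2) ℂ)) :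
    ∃ ℓ : ℂ → Projectivization ℂ (Fin 2 → ℂ),
      (∀ η₀ ∈ U, ∃ W : Set ℂ, IsOpen W ∧ η₀ ∈ W ∧ W ⊆ U ∧
        ∃ v : ℂ → (Fin 2 → ℂ), DifferentiableOn ℂ v W ∧
          ∀ η ∈ W, ∃ hv : v η ≠ 0, ℓ η = Projectivization.mk ℂ (v η) hv) ∧
      (∀ η ∈ U, M η ≠ lam η • (1 : Matrix (Fin 2) (Fin 2) ℂ) →
        ∃ (v : Fin 2 → ℂ) (hv : v ≠ 0),
          ℓ η = Projectivization.mk ℂ v hv ∧ (M η).mulVec v = lam η • v) := by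
  classical
  set A : ℂ → Matrix (Fin 2) (Fin 2) ℂ := fun η => M η - lam η • 1 with hAdef
  -- mulVec of A in terms of M
  have hAmv : ∀ η (x : Fin 2 → ℂ), (A η).mulVec x = (M η).mulVec x - lam η • x := by
    intro η x
    simp [hAdef, Matrix.sub_mulVec, Matrix.smul_mulVec, Matrix.one_mulVec]
  -- entries of A are differentiable on U
  have hAent : ∀ i j, DifferentiableOn ℂ (fun η => A η i j) U := by
    intro i j
    have : (fun η => A η i j) =
        fun η => M η i j - lam η * (1 : Matrix (Fin 2) (Fin 2) ℂ) i j := by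
      funext η
      simp [hAdef, Matrix.sub_apply, Matrix.smul_apply, smul_eq_mul]
    rw [this]
    exact (hM i j).sub (hlam.mul_const _)
  have hAanal : ∀ i j, ∀ η₀ ∈ U, AnalyticAt ℂ (fun η => A η i j) η₀ :=
    fun i j η₀ h => (hAent i j).analyticAt (hU.mem_nhds h)
  -- determinant vanishes on U
  have hdet : ∀ η ∈ U, A η 0 0 * A η 1 1 - A η 0 1 * A η 1 0 = 0 := by
    intro η hη
    obtain ⟨v, hv, hmv⟩ := heig η hη
    have h0 : (A η).mulVec v = 0 := by rw [hAmv, hmv, sub_self]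
    have : (A η).det = 0 := Matrix.exists_mulVec_eq_zero_iff.mp ⟨v, hv, h0⟩
    simpa [Matrix.det_fin_two] using this
  -- the two candidate lifts
  set u : ℂ → (Fin 2 → ℂ) := fun η => ![-(A η 0 1), A η 0 0] with hudef
  set w : ℂ → (Fin 2 → ℂ) := fun η => ![A η 1 1, -(A η 1 0)] with hwdef
  have hAu : ∀ η ∈ U, (A η).mulVec (u η) = 0 := by
    intro η hη
    funext i
    fin_cases i <;>
      simp [hudef, Matrix.mulVec, dotProduct, Fin.sum_univ_two]
    · ring
    · linear_combination hdet η hη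
  have hAw : ∀ η ∈ U, (A η).mulVec (w η) = 0 := by
    intro η hη
    funext i
    fin_cases i <;>
      simp [hwdef, Matrix.mulVec, dotProduct, Fin.sum_univ_two]
    · linear_combination hdet η hη
    · ring
  have hudiff : DifferentiableOn ℂ u U := by
    rw [differentiableOn_pi]
    intro i
    fin_cases i
    · simpa [hudef] using (hAent 0 1).neg
    · simpa [hudef] using hAent 0 0
  have hwdiff : DifferentiableOn ℂ w U := by
    rw [differentiableOn_pi]
    intro i
    fin_cases i
    · simpa [hwdef] using hAent 1 1
    · simpa [hwdef] using (hAent 1 0).neg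
  -- not all entries vanish near any point
  have hnotall : ∀ η₀ ∈ U, ¬ (∀ᶠ z in 𝓝 η₀, A z = 0) := by
    intro η₀ hη₀ h
    obtain ⟨η₁, hη₁, hMne⟩ := hne
    apply hMne
    have hzero : ∀ i j, Set.EqOn (fun η => A η i j) 0 U := by
      intro i j
      apply AnalyticOnNhd.eqOn_zero_of_preconnected_of_eventuallyEq_zero
        (fun z hz => hAanal i j z hz) hUconn.isPreconnected hη₀
      filter_upwards [h] with z hz
      simp [hz]
    have hA1 : A η₁ = 0 := by
      ext i j
      exact hzero i j hη₁
    rw [hAdef] at hA1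
    exact sub_eq_zero.mp hA1
  -- isolation of zeros of A
  have hiso : ∀ η₀ ∈ U, ∀ᶠ z in 𝓝[≠] η₀, A z ≠ 0 := by
    intro η₀ hη₀
    have hex : ∃ i j, ¬ (∀ᶠ z in 𝓝 η₀, A z i j = 0) := by
      by_contra hc
      push_neg at hc
      apply hnotall η₀ hη₀
      filter_upwards [hc 0 0, hc 0 1, hc 1 0, hc 1 1] with z h00 h01 h10 h11
      ext i j
      fin_cases i <;> fin_cases j <;> simpa
    obtain ⟨i, j, hij⟩ := hex
    rcases (hAanal i j η₀ hη₀).eventually_eq_zero_or_eventually_ne_zero with h | h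
    · exact absurd h hij
    · filter_upwards [h] with z hz hz0
      exact hz (by rw [hz0]; simp)
  -- the local construction
  have key : ∀ η₀ ∈ U, ∃ (W : Set ℂ) (v : ℂ → Fin 2 → ℂ),
      IsOpen W ∧ η₀ ∈ W ∧ W ⊆ U ∧ DifferentiableOn ℂ v W ∧
      (∀ z ∈ W, v z ≠ 0) ∧ (∀ z ∈ W, A z ≠ 0 → (A z).mulVec (v z) = 0) := by
    intro η₀ hη₀
    by_cases hA0 : A η₀ = 0
    · -- order construction
      have huanal : AnalyticAt ℂ u η₀ := hudiff.analyticAt (hU.mem_nhds hη₀)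
      have hwanal : AnalyticAt ℂ w η₀ := hwdiff.analyticAt (hU.mem_nhds hη₀)
      have hFanal : AnalyticAt ℂ (fun z => (u z, w z)) η₀ := huanal.prod hwanal
      have hFne : ¬ (∀ᶠ z in 𝓝 η₀, (u z, w z) = 0) := by
        intro h
        apply hnotall η₀ hη₀
        filter_upwards [h] with z hz
        have h1 := congrFun (congrArg Prod.fst hz) 0
        have h2 := congrFun (congrArg Prod.fst hz) 1
        have h3 := congrFun (congrArg Prod.snd hz) 0
        have h4 := congrFun (congrArg Prod.snd hz) 1
        simp [hudef, hwdef] at h1 h2 h3 h4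
        ext i j
        fin_cases i <;> fin_cases j <;> simpa
      obtain ⟨n, G, hGanal, hGne, hGeq⟩ :=
        (hFanal.exists_eventuallyEq_pow_smul_nonzero_iff).mpr hFne
      -- a generic sub-construction
      have main : ∀ (b : ℂ → Fin 2 → ℂ), (∀ z ∈ U, (A z).mulVec (b z) = 0) →
          ∀ (g : ℂ → Fin 2 → ℂ), AnalyticAt ℂ g η₀ → g η₀ ≠ 0 →
          (∀ᶠ z in 𝓝 η₀, b z = (z - η₀) ^ n • g z) →
          ∃ (W : Set ℂ) (v : ℂ → Fin 2 → ℂ),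
            IsOpen W ∧ η₀ ∈ W ∧ W ⊆ U ∧ DifferentiableOn ℂ v W ∧
            (∀ z ∈ W, v z ≠ 0) ∧ (∀ z ∈ W, A z ≠ 0 → (A z).mulVec (v z) = 0) := by
        intro b hbker g hganal hgne hbeq
        have hgne' : ∀ᶠ z in 𝓝 η₀, g z ≠ 0 := hganal.continuousAt.eventually_ne hgne
        have hgan' : ∀ᶠ z in 𝓝 η₀, AnalyticAt ℂ g z := hganal.eventually_analyticAt
        have hall : ∀ᶠ z in 𝓝 η₀,
            b z = (z - η₀) ^ n • g z ∧ g z ≠ 0 ∧ AnalyticAt ℂ g z ∧ z ∈ U := by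
          filter_upwards [hbeq, hgne', hgan', hU.mem_nhds hη₀] with z h1 h2 h3 h4
          exact ⟨h1, h2, h3, h4⟩
        obtain ⟨W, hWsub, hWo, hWmem⟩ := eventually_nhds_iff.mp hall
        refine ⟨W, g, hWo, hWmem, fun z hz => (hWsub z hz).2.2.2, ?_, ?_, ?_⟩
        · exact fun z hz => ((hWsub z hz).2.2.1).differentiableAt.differentiableWithinAt
        · exact fun z hz => (hWsub z hz).2.1
        · intro z hz hAz
          have hzne : z ≠ η₀ := by
            rintro rfl
            exact hAz hA0
          have hpow : (z - η₀) ^ n ≠ 0 := pow_ne_zero _ (sub_ne_zero.mpr hzne)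
          have h1 : (A z).mulVec (b z) = 0 := hbker z (hWsub z hz).2.2.2
          rw [(hWsub z hz).1, Matrix.mulVec_smul] at h1
          exact (smul_eq_zero.mp h1).resolve_left hpow
      rcases (show (G η₀).1 ≠ 0 ∨ (G η₀).2 ≠ 0 by
          by_contra hc
          push_neg at hc
          exact hGne (Prod.ext hc.1 hc.2)) with hg | hg
      · refine main u (fun z hz => hAu z hz) (fun z => (G z).1)
          (analyticAt_fst.comp hGanal) hg ?_
        filter_upwards [hGeq] with z hz
        rw [show u z = (u z, w z).1 from rfl, hz]
        simp [Prod.smul_fst]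
      · refine main w (fun z hz => hAw z hz) (fun z => (G z).2)
          (analyticAt_snd.comp hGanal) hg ?_
        filter_upwards [hGeq] with z hz
        rw [show w z = (u z, w z).2 from rfl, hz]
        simp [Prod.smul_snd]
    · -- simple branch : A η₀ ≠ 0, so u η₀ ≠ 0 or w η₀ ≠ 0
      have hor : u η₀ ≠ 0 ∨ w η₀ ≠ 0 := by
        by_contra hc
        push_neg at hc
        obtain ⟨hc1, hc2⟩ := hc
        apply hA0
        have h1 := congrFun hc1 0
        have h2 := congrFun hc1 1
        have h3 := congrFun hc2 0
        have h4 := congrFun hc2 1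
        simp [hudef, hwdef] at h1 h2 h3 h4
        ext i j
        fin_cases i <;> fin_cases j <;> simpa
      rcases hor with hα | hα
      · refine ⟨U ∩ u ⁻¹' ({0}ᶜ), u,
          hudiff.continuousOn.isOpen_inter_preimage hU isOpen_compl_singleton,
          ⟨hη₀, hα⟩, Set.inter_subset_left,
          hudiff.mono Set.inter_subset_left, fun z hz => hz.2, fun z hz _ => hAu z hz.1⟩
      · refine ⟨U ∩ w ⁻¹' ({0}ᶜ), w,
          hwdiff.continuousOn.isOpen_inter_preimage hU isOpen_compl_singleton,
          ⟨hη₀, hα⟩, Set.inter_subset_left,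
          hwdiff.mono Set.inter_subset_left, fun z hz => hz.2, fun z hz _ => hAw z hz.1⟩
  choose W v hWo hWmem hWsub hvdiff hvne hvker using key
  -- agreement of any two local lifts
  have hagree : ∀ (η₀ : ℂ) (h₀ : η₀ ∈ U) (η₁ : ℂ) (h₁ : η₁ ∈ U) (z : ℂ)
      (hz₀ : z ∈ W η₀ h₀) (hz₁ : z ∈ W η₁ h₁),
      v η₀ h₀ z 0 * v η₁ h₁ z 1 - v η₀ h₀ z 1 * v η₁ h₁ z 0 = 0 := by
    intro η₀ h₀ η₁ h₁ z hz₀ hz₁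
    by_cases hAz : A z = 0
    · -- limit argument
      set c : ℂ → ℂ := fun x =>
        v η₀ h₀ x 0 * v η₁ h₁ x 1 - v η₀ h₀ x 1 * v η₁ h₁ x 0 with hcdef
      have hWo' : IsOpen (W η₀ h₀ ∩ W η₁ h₁) := (hWo _ _).inter (hWo _ _)
      have hzmem : z ∈ W η₀ h₀ ∩ W η₁ h₁ := ⟨hz₀, hz₁⟩
      have hcdiff : DifferentiableOn ℂ c (W η₀ h₀ ∩ W η₁ h₁) := by
        apply DifferentiableOn.sub <;> apply DifferentiableOn.mul
        · exact (differentiableOn_pi.mp (hvdiff η₀ h₀) 0).mono Set.inter_subset_left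
        · exact (differentiableOn_pi.mp (hvdiff η₁ h₁) 1).mono Set.inter_subset_right
        · exact (differentiableOn_pi.mp (hvdiff η₀ h₀) 1).mono Set.inter_subset_left
        · exact (differentiableOn_pi.mp (hvdiff η₁ h₁) 0).mono Set.inter_subset_right
      have hccont : ContinuousAt c z :=
        (hcdiff.differentiableAt (hWo'.mem_nhds hzmem)).continuousAt
      have hev : ∀ᶠ x in 𝓝[≠] z, c x = 0 := by
        have h1 : ∀ᶠ x in 𝓝[≠] z, A x ≠ 0 := hiso z (hWsub η₀ h₀ hz₀)
        have h2 : ∀ᶠ x in 𝓝[≠] z, x ∈ W η₀ h₀ ∩ W η₁ h₁ :=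
          (hWo'.eventually_mem hzmem).filter_mono nhdsWithin_le_nhds
        filter_upwards [h1, h2] with x hx hxm
        exact aux_cross (A x) _ _ hx (hvker η₀ h₀ x hxm.1 hx) (hvker η₁ h₁ x hxm.2 hx)
      have ht1 : Tendsto c (𝓝[≠] z) (𝓝 (c z)) :=
        (hccont.tendsto).mono_left nhdsWithin_le_nhds
      have ht2 : Tendsto c (𝓝[≠] z) (𝓝 0) :=
        Tendsto.congr' (by filter_upwards [hev] with x hx; exact hx.symm) tendsto_const_nhds
      exact tendsto_nhds_unique ht1 ht2
    · exact aux_cross (A z) _ _ hAz (hvker η₀ h₀ z hz₀ hAz) (hvker η₁ h₁ z hz₁ hAz)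
  -- define ℓ
  have hone : (![1, 0] : Fin 2 → ℂ) ≠ 0 := by
    intro h
    have := congrFun h 0
    simp at this
  haveI : Nonempty (Projectivization ℂ (Fin 2 → ℂ)) := ⟨Projectivization.mk ℂ _ hone⟩
  refine ⟨fun η => if h : η ∈ U then
      Projectivization.mk ℂ (v η h η) (hvne η h η (hWmem η h)) else Classical.arbitrary _,
    ?_, ?_⟩
  · intro η₀ hη₀
    refine ⟨W η₀ hη₀, hWo η₀ hη₀, hWmem η₀ hη₀, hWsub η₀ hη₀, v η₀ hη₀,
      hvdiff η₀ hη₀, ?_⟩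
    intro η hη
    have hηU : η ∈ U := hWsub η₀ hη₀ hη
    refine ⟨hvne η₀ hη₀ η hη, ?_⟩
    simp only [dif_pos hηU]
    exact aux_mk _ _ _ _ (hagree η hηU η₀ hη₀ η (hWmem η hηU) hη)
  · intro η hη hMη
    have hAη : A η ≠ 0 := by
      rw [hAdef]
      exact sub_ne_zero_of_ne hMη
    refine ⟨v η hη η, hvne η hη η (hWmem η hη), by simp only [dif_pos hη], ?_⟩
    have := hvker η hη η (hWmem η hη) hAη
    rw [hAmv] at this
    exact sub_eq_zero.mp this
end

section
/- Let 𝒜 be an abelian category of finite length (every object is both noetherian and artinian), and let Z : K(𝒜) → ℂ be a stability function, i.e. a group homomorphism on the Grothendieck group such that Z(E) lies in the semi-closed upper half plane ℋ = {r·e^{iπφ} : r > 0, 0 < φ ≤ 1} for every nonzero object E. Then Z automatically has the Harder–Narasimhan property: every nonzero object E ∈ 𝒜 admits a finite filtration 0 = E₀ ⊂ E₁ ⊂ … ⊂ E_n = E whose successive quotients F_j = E_j/E_{j-1} are Z-semistable with strictly decreasing phases φ(F₁) > φ(F₂) > … > φ(F_n). -/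
open CategoryTheory CategoryTheory.Limits ZeroObject Complex

namespace HNaux

/-- membership in the semiclosed upper half plane -/
def Pos (z : ℂ) : Prop := z ≠ 0 ∧ 0 < z.arg

lemma im_nonneg {z : ℂ} (hz : Pos z) : 0 ≤ z.im :=
  Complex.arg_nonneg_iff.mp hz.2.le

lemma pos_of_im_pos {z : ℂ} (h : 0 < z.im) : Pos z := by
  refine ⟨fun h0 => by simp [h0] at h, ?_⟩
  rcases lt_or_eq_of_le (Complex.arg_nonneg_iff.mpr h.le) with h' | h'
  · exact h'
  · exfalso
    have := Complex.arg_eq_zero_iff.mp h'.symm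
    rw [this.2] at h
    exact lt_irrefl _ h

lemma pos_iff {z : ℂ} : Pos z ↔ 0 < z.im ∨ (z.im = 0 ∧ z.re < 0) := by
  constructor
  · rintro ⟨h0, h1⟩
    rcases lt_or_eq_of_le (im_nonneg ⟨h0, h1⟩) with h | h
    · exact Or.inl h
    · refine Or.inr ⟨h.symm, ?_⟩
      by_contra hre
      push_neg at hre
      exact absurd (Complex.arg_eq_zero_iff.mpr ⟨hre, h.symm⟩) (ne_of_gt h1)
  · rintro (h | ⟨h1, h2⟩)
    · exact pos_of_im_pos h
    · refine ⟨fun h0 => by rw [h0] at h2; simp at h2, ?_⟩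
      rw [Complex.arg_eq_pi_iff.mpr ⟨h2, h1⟩]
      exact Real.pi_pos

lemma pos_add {z w : ℂ} (hz : Pos z) (hw : Pos w) : Pos (z + w) := by
  rcases pos_iff.mp hz with h | ⟨h1, h2⟩ <;> rcases pos_iff.mp hw with h' | ⟨h1', h2'⟩
  · exact pos_of_im_pos (by simp only [Complex.add_im]; positivity)
  · exact pos_of_im_pos (by simp only [Complex.add_im, h1']; linarith)
  · exact pos_of_im_pos (by simp only [Complex.add_im, h1]; linarith)
  · exact pos_iff.mpr (Or.inr ⟨by simp [Complex.add_im, h1, h1'], by simp only [Complex.add_re]; linarith⟩)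

lemma cross_eq (z w : ℂ) :
    (w * (starRingEnd ℂ) z).im = ‖w‖ * ‖z‖ * Real.sin (w.arg - z.arg) := by
  have h1 : w * (starRingEnd ℂ) z
      = (↑(‖w‖ * ‖z‖) : ℂ) * Complex.exp (↑(w.arg - z.arg) * I) := by
    nth_rewrite 1 [← Complex.norm_mul_exp_arg_mul_I w]
    nth_rewrite 1 [← Complex.norm_mul_exp_arg_mul_I z]
    rw [map_mul, ← Complex.exp_conj]
    simp only [map_mul, Complex.conj_ofReal, Complex.conj_I, mul_neg]
    rw [mul_mul_mul_comm, ← Complex.exp_add]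
    congr 1
    · push_cast; ring
    · congr 1; push_cast; ring
  rw [h1, Complex.im_ofReal_mul]
  congr 1
  exact Complex.exp_ofReal_mul_I_im _

lemma arg_le_arg_iff {z w : ℂ} (hz : Pos z) (hw : Pos w) :
    z.arg ≤ w.arg ↔ 0 ≤ (w * (starRingEnd ℂ) z).im := by
  rw [cross_eq]
  have hz' := norm_pos_iff.mpr hz.1
  have hw' := norm_pos_iff.mpr hw.1
  have hzp := hz.2
  have hwp := hw.2
  have hzpi := Complex.arg_le_pi z
  have hwpi := Complex.arg_le_pi w
  constructor
  · intro h
    have : 0 ≤ Real.sin (w.arg - z.arg) :=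
      Real.sin_nonneg_of_nonneg_of_le_pi (by linarith) (by linarith)
    positivity
  · intro h
    by_contra hlt
    push_neg at hlt
    have hpos : 0 < Real.sin (z.arg - w.arg) :=
      Real.sin_pos_of_pos_of_lt_pi (by linarith) (by linarith)
    have hneg : Real.sin (w.arg - z.arg) < 0 := by
      rw [← neg_sub, Real.sin_neg]; linarith
    have : ‖w‖ * ‖z‖ * Real.sin (w.arg - z.arg) < 0 :=
      mul_neg_of_pos_of_neg (mul_pos hw' hz') hneg
    linarith

lemma cross_antisymm (z w : ℂ) :
    (z * (starRingEnd ℂ) w).im = -((w * (starRingEnd ℂ) z).im) := by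
  simp only [Complex.mul_im, Complex.conj_re, Complex.conj_im]
  ring

lemma arg_lt_arg_iff {z w : ℂ} (hz : Pos z) (hw : Pos w) :
    z.arg < w.arg ↔ 0 < (w * (starRingEnd ℂ) z).im := by
  rw [← not_le, arg_le_arg_iff hw hz, not_le, cross_antisymm]
  constructor <;> intro h <;> linarith

lemma cross_add_left (z w : ℂ) : ((z + w) * (starRingEnd ℂ) z).im = (w * (starRingEnd ℂ) z).im := by
  rw [add_mul]
  simp [Complex.mul_conj]

lemma cross_add_right (z w : ℂ) : (w * (starRingEnd ℂ) (z + w)).im = (w * (starRingEnd ℂ) z).im := by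
  rw [map_add, mul_add]
  simp [Complex.mul_conj]

/-- see-saw, ≤ version -/
lemma seesaw_le {z w : ℂ} (hz : Pos z) (hw : Pos w) (h : z.arg ≤ w.arg) :
    z.arg ≤ (z + w).arg ∧ (z + w).arg ≤ w.arg := by
  have hzw := pos_add hz hw
  have hc : 0 ≤ (w * (starRingEnd ℂ) z).im := (arg_le_arg_iff hz hw).mp h
  constructor
  · rw [arg_le_arg_iff hz hzw, cross_add_left]; exact hc
  · rw [arg_le_arg_iff hzw hw, cross_add_right]; exact hc

/-- see-saw, < version -/
lemma seesaw_lt {z w : ℂ} (hz : Pos z) (hw : Pos w) (h : z.arg < w.arg) :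
    z.arg < (z + w).arg ∧ (z + w).arg < w.arg := by
  have hzw := pos_add hz hw
  have hc : 0 < (w * (starRingEnd ℂ) z).im := (arg_lt_arg_iff hz hw).mp h
  constructor
  · rw [arg_lt_arg_iff hz hzw, cross_add_left]; exact hc
  · rw [arg_lt_arg_iff hzw hw, cross_add_right]; exact hc


section
variable {𝒜 : Type*} [Category 𝒜] [Abelian 𝒜] (Z : 𝒜 → ℂ)
variable (hadd : ∀ S : ShortComplex 𝒜, S.ShortExact → Z S.X₂ = Z S.X₁ + Z S.X₃)

include hadd

lemma Z_zero {X : 𝒜} (h : IsZero X) : Z X = 0 := by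
  have hzero : (𝟙 X) ≫ (𝟙 X) = 0 := by
    rw [Category.comp_id]; exact h.eq_of_src _ _
  set S : ShortComplex 𝒜 := ShortComplex.mk (𝟙 X) (𝟙 X) hzero with hS
  have hse : S.ShortExact := { exact := S.exact_of_isZero_X₂ h }
  have := hadd S hse
  simp only [hS] at this
  change Z X = Z X + Z X at this
  exact left_eq_add.mp this

lemma Z_iso {X Y : 𝒜} (e : X ≅ Y) : Z X = Z Y := by
  have hepi : Epi (0 : Y ⟶ (0 : 𝒜)) := ⟨fun g h _ => (isZero_zero 𝒜).eq_of_src g h⟩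
  set S : ShortComplex 𝒜 := ShortComplex.mk e.hom (0 : Y ⟶ (0 : 𝒜)) (comp_zero) with hS
  have hse : S.ShortExact := by
    refine { exact := ?_, mono_f := ?_, epi_g := ?_ }
    · exact (S.exact_iff_epi rfl).mpr (by dsimp [S]; infer_instance)
    · dsimp [S]; infer_instance
    · exact hepi
  have h1 := hadd S hse
  change Z Y = Z X + Z (0 : 𝒜) at h1
  rw [Z_zero Z hadd (isZero_zero 𝒜)] at h1
  rw [h1, add_zero]

/-- additivity for a mono and its cokernel -/
lemma Z_mono {W X : 𝒜} (f : W ⟶ X) [Mono f] : Z X = Z W + Z (cokernel f) := by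
  set S : ShortComplex 𝒜 := ShortComplex.mk f (cokernel.π f) (cokernel.condition f) with hS
  have hse : S.ShortExact := by
    refine { exact := ?_, mono_f := ?_, epi_g := ?_ }
    · exact S.exact_of_g_is_cokernel (cokernelIsCokernel f)
    · dsimp [S]; infer_instance
    · dsimp [S]; infer_instance
  exact hadd S hse

/-- additivity for an epi and its kernel -/
lemma Z_epi {X A : 𝒜} (p : X ⟶ A) [Epi p] : Z X = Z (kernel p) + Z A := by
  set S : ShortComplex 𝒜 := ShortComplex.mk (kernel.ι p) p (kernel.condition p) with hS
  have hse : S.ShortExact := by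
    refine { exact := ?_, mono_f := ?_, epi_g := ?_ }
    · exact S.exact_of_f_is_kernel (kernelIsKernel p)
    · dsimp [S]; infer_instance
    · dsimp [S]; infer_instance
  exact hadd S hse

end

section
variable {𝒜 : Type*} [Category 𝒜] [Abelian 𝒜]

/-- kernel of the cokernel projection of a mono is the source -/
noncomputable def kerCokerIso {W X : 𝒜} (f : W ⟶ X) [Mono f] :
    kernel (cokernel.π f) ≅ W :=
  IsLimit.conePointUniqueUpToIso (kernelIsKernel (cokernel.π f))
    (Abelian.monoIsKernelOfCokernel (CokernelCofork.ofπ (cokernel.π f) (cokernel.condition f))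
      (cokernelIsCokernel f))

/-- Z of a pullback of a mono along an epi -/
lemma Z_pullback (Z : 𝒜 → ℂ)
    (Z_iso' : ∀ {X Y : 𝒜}, (X ≅ Y) → Z X = Z Y)
    (Z_epi' : ∀ {X A : 𝒜} (p : X ⟶ A), Epi p → Z X = Z (kernel p) + Z A)
    {X Q A : 𝒜} (π : X ⟶ Q) [Epi π] (g : A ⟶ Q) [Mono g] :
    Z (pullback g π) = Z (kernel π) + Z A := by
  have hepi : Epi (pullback.fst g π) := inferInstance
  have h1 : Z (pullback g π) = Z (kernel (pullback.fst g π)) + Z A :=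
    Z_epi' (pullback.fst g π) hepi
  set p₁ := pullback.fst g π
  set p₂ := pullback.snd g π
  have hl0 : (0 : kernel π ⟶ A) ≫ g = kernel.ι π ≫ π := by
    simp [kernel.condition]
  set ℓ : kernel π ⟶ pullback g π := pullback.lift 0 (kernel.ι π) hl0 with hℓ
  have hℓ1 : ℓ ≫ p₁ = 0 := pullback.lift_fst _ _ _
  have hℓ2 : ℓ ≫ p₂ = kernel.ι π := pullback.lift_snd _ _ _
  have hm0 : (kernel.ι p₁ ≫ p₂) ≫ π = 0 := by
    rw [Category.assoc, ← pullback.condition]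
    rw [← Category.assoc, kernel.condition, zero_comp]
  set m : kernel p₁ ⟶ kernel π := kernel.lift π (kernel.ι p₁ ≫ p₂) hm0 with hm
  set ℓ' : kernel π ⟶ kernel p₁ := kernel.lift p₁ ℓ hℓ1 with hℓ'
  have hme : m ≫ kernel.ι π = kernel.ι p₁ ≫ p₂ := by simp [hm]
  have hℓ'e : ℓ' ≫ kernel.ι p₁ = ℓ := by simp [hℓ']
  have hcomp : (m ≫ ℓ') ≫ kernel.ι p₁ = 𝟙 _ ≫ kernel.ι p₁ := by
    rw [Category.assoc, hℓ'e, Category.id_comp, ← cancel_mono p₂, Category.assoc, hℓ2, hme]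
  have hcomp2 : (ℓ' ≫ m) ≫ kernel.ι π = 𝟙 _ ≫ kernel.ι π := by
    rw [Category.assoc, hme, ← Category.assoc, hℓ'e, hℓ2, Category.id_comp]
  have e : kernel p₁ ≅ kernel π :=
    ⟨m, ℓ', (cancel_mono _).mp hcomp, (cancel_mono _).mp hcomp2⟩
  rw [h1, Z_iso' e]

/-- Z is additive on binary biproducts -/
lemma Z_biprod (Z : 𝒜 → ℂ)
    (hadd : ∀ S : ShortComplex 𝒜, S.ShortExact → Z S.X₂ = Z S.X₁ + Z S.X₃)
    (A B : 𝒜) :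
    Z (A ⊞ B) = Z A + Z B := by
  have hzero : (biprod.inl : A ⟶ A ⊞ B) ≫ (biprod.snd : A ⊞ B ⟶ B) = 0 := biprod.inl_snd
  set S : ShortComplex 𝒜 := ShortComplex.mk _ _ hzero with hS
  have hlim : IsLimit (KernelFork.ofι _ hzero) := by
    refine KernelFork.IsLimit.ofι _ _ (fun g' h => g' ≫ biprod.fst) ?_ ?_
    · intro W' g' eq'
      apply biprod.hom_ext
      · simp
      · simp [eq']
    · intro W' g' eq' mm hmm
      show mm = g' ≫ biprod.fst
      rw [← hmm]; simp
  have hse : S.ShortExact := by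
    refine { exact := S.exact_of_f_is_kernel hlim, mono_f := ?_, epi_g := ?_ }
    · dsimp [S]; infer_instance
    · dsimp [S]; infer_instance
  exact hadd S hse

lemma Z_modular (Z : 𝒜 → ℂ)
    (hadd : ∀ S : ShortComplex 𝒜, S.ShortExact → Z S.X₂ = Z S.X₁ + Z S.X₃)
    {X : 𝒜} (A B : Subobject X) :
    Z (((A ⊔ B : Subobject X)) : 𝒜) + Z (((A ⊓ B : Subobject X)) : 𝒜) = Z (A : 𝒜) + Z (B : 𝒜) := by
  have huA : Subobject.ofLE A (A ⊔ B) le_sup_left ≫ (A ⊔ B).arrow = A.arrow :=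
    Subobject.ofLE_arrow _
  have huB : Subobject.ofLE B (A ⊔ B) le_sup_right ≫ (A ⊔ B).arrow = B.arrow :=
    Subobject.ofLE_arrow _
  set φ : (A : 𝒜) ⊞ (B : 𝒜) ⟶ ((A ⊔ B : Subobject X) : 𝒜) :=
    biprod.desc (Subobject.ofLE A (A ⊔ B) le_sup_left)
      (Subobject.ofLE B (A ⊔ B) le_sup_right) with hφdef
  have hφ : φ = biprod.fst ≫ Subobject.ofLE A (A ⊔ B) le_sup_left
      + biprod.snd ≫ Subobject.ofLE B (A ⊔ B) le_sup_right := by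
    rw [← Category.id_comp φ, ← biprod.total, Preadditive.add_comp, Category.assoc,
      Category.assoc, hφdef, biprod.inl_desc, biprod.inr_desc]
  -- Epi φ
  have hepiφ : Epi φ := by
    set ψ : image φ ⟶ X := image.ι φ ≫ (A ⊔ B).arrow with hψ
    have hA : A ≤ Subobject.mk ψ := by
      refine Subobject.le_mk_of_comm (biprod.inl ≫ factorThruImage φ) ?_
      simp [hψ, hφdef]
    have hB : B ≤ Subobject.mk ψ := by
      refine Subobject.le_mk_of_comm (biprod.inr ≫ factorThruImage φ) ?_
      simp [hψ, hφdef]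
    have hmk : Subobject.mk ψ ≤ A ⊔ B := Subobject.mk_le_of_comm (image.ι φ) rfl
    have heq : Subobject.mk ψ = Subobject.mk ((A ⊔ B).arrow) := by
      rw [Subobject.mk_arrow]; exact le_antisymm hmk (sup_le hA hB)
    have hj := Subobject.ofMkLEMk_comp heq.le
    have hii : image.ι φ = Subobject.ofMkLEMk ψ ((A ⊔ B).arrow) heq.le := by
      rw [← cancel_mono ((A ⊔ B).arrow), hj, hψ]
    have hiso : IsIso (image.ι φ) := by
      rw [hii]
      have : IsIso (Subobject.isoOfMkEqMk ψ ((A ⊔ B).arrow) heq).hom := inferInstance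
      rwa [Subobject.isoOfMkEqMk_hom] at this
    rw [← image.fac φ]
    exact @epi_comp _ _ _ _ _ _ inferInstance _ (@IsIso.epi_of_iso _ _ _ _ _ hiso)
  -- the kernel map
  set f' : ((A ⊓ B : Subobject X) : 𝒜) ⟶ (A : 𝒜) ⊞ (B : 𝒜) :=
    biprod.lift (Subobject.ofLE (A ⊓ B) A inf_le_left)
      (-(Subobject.ofLE (A ⊓ B) B inf_le_right)) with hf'
  have hzero : f' ≫ φ = 0 := by
    rw [hf', hφdef, biprod.lift_desc, Preadditive.neg_comp,
      Subobject.ofLE_comp_ofLE, Subobject.ofLE_comp_ofLE]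
    exact add_neg_cancel _
  have hmonof' : Mono f' := by
    have hfst : f' ≫ biprod.fst = Subobject.ofLE (A ⊓ B) A inf_le_left := by
      rw [hf', biprod.lift_fst]
    exact mono_of_mono_fac hfst
  have key : ∀ {W' : 𝒜} (g' : W' ⟶ (A : 𝒜) ⊞ (B : 𝒜)), g' ≫ φ = 0 →
      g' ≫ biprod.fst ≫ A.arrow = -(g' ≫ biprod.snd ≫ B.arrow) := by
    intro W' g' eq'
    have h3 : (g' ≫ φ) ≫ (A ⊔ B).arrow = 0 := by rw [eq', zero_comp]
    rw [hφ, Preadditive.comp_add, Preadditive.add_comp, Category.assoc, Category.assoc,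
      Category.assoc, Category.assoc, huA, huB] at h3
    exact eq_neg_of_add_eq_zero_left h3
  have hfactors : ∀ {W' : 𝒜} (g' : W' ⟶ (A : 𝒜) ⊞ (B : 𝒜)), g' ≫ φ = 0 →
      (A ⊓ B).Factors (g' ≫ biprod.fst ≫ A.arrow) := by
    intro W' g' eq'
    refine (Subobject.inf_factors _).mpr ⟨?_, ?_⟩
    · have := Subobject.factors_comp_arrow (P := A) (g' ≫ biprod.fst)
      rwa [Category.assoc] at this
    · have := Subobject.factors_comp_arrow (P := B) (-(g' ≫ biprod.snd))
      rwa [Preadditive.neg_comp, Category.assoc, ← key g' eq'] at this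
  have hlim : IsLimit (KernelFork.ofι f' hzero) := by
    refine KernelFork.IsLimit.ofι _ _
      (fun g' eq' => (A ⊓ B).factorThru _ (hfactors g' eq')) ?_ ?_
    · intro W' g' eq'
      show (A ⊓ B).factorThru _ (hfactors g' eq') ≫ f' = g'
      apply biprod.hom_ext
      · rw [← cancel_mono A.arrow, Category.assoc, Category.assoc, Category.assoc]
        simp [hf', Subobject.factorThru_arrow]
      · rw [← cancel_mono B.arrow, Category.assoc, Category.assoc, Category.assoc]
        simp [hf', key g' eq']
    · intro W' g' eq' mm hmm
      have := hmonof'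
      show mm = (A ⊓ B).factorThru _ (hfactors g' eq')
      rw [← cancel_mono f', hmm]
      apply biprod.hom_ext
      · rw [← cancel_mono A.arrow, Category.assoc, Category.assoc, Category.assoc]
        simp [hf', Subobject.factorThru_arrow]
      · rw [← cancel_mono B.arrow, Category.assoc, Category.assoc, Category.assoc]
        simp [hf', key g' eq']
  set S : ShortComplex 𝒜 := ShortComplex.mk f' φ hzero with hS
  have hse : S.ShortExact :=
    { exact := S.exact_of_f_is_kernel hlim, mono_f := hmonof', epi_g := hepiφ }
  have h := hadd S hse
  change Z ((A : 𝒜) ⊞ (B : 𝒜)) = Z (((A ⊓ B : Subobject X)) : 𝒜)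
    + Z (((A ⊔ B : Subobject X)) : 𝒜) at h
  have hbi : Z ((A : 𝒜) ⊞ (B : 𝒜)) = Z (A : 𝒜) + Z (B : 𝒜) := by
    have hzero2 : (biprod.inl : (A : 𝒜) ⟶ _ ⊞ (B : 𝒜)) ≫ biprod.snd = 0 := biprod.inl_snd
    set S2 : ShortComplex 𝒜 := ShortComplex.mk _ _ hzero2 with hS2
    have hlim2 : IsLimit (KernelFork.ofι _ hzero2) := by
      refine KernelFork.IsLimit.ofι _ _ (fun g' h => g' ≫ biprod.fst) ?_ ?_
      · intro W' g' eq'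
        apply biprod.hom_ext
        · simp
        · simp [eq']
      · intro W' g' eq' mm hmm
        show mm = g' ≫ biprod.fst
        rw [← hmm]; simp
    have hse2 : S2.ShortExact := by
      refine { exact := S2.exact_of_f_is_kernel hlim2, mono_f := ?_, epi_g := ?_ }
      · dsimp [S2]; infer_instance
      · dsimp [S2]; infer_instance
    exact hadd S2 hse2
  rw [hbi] at h
  linear_combination -h
end

lemma abstract_HN {α : Type*} [Lattice α] [OrderTop α] (v : α → ℂ)
    (wfgt : WellFounded ((· > ·) : α → α → Prop))
    (wflt : WellFounded ((· < ·) : α → α → Prop))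
    (hv : ∀ {P Q : α}, P < Q → Pos (v Q - v P))
    (hmod : ∀ A B : α, v (A ⊔ B) + v (A ⊓ B) = v A + v B) (a : α) :
    ∃ (N : ℕ) (c : ℕ → α), c 0 = a ∧ c N = ⊤ ∧
      (∀ i, i < N → c i < c (i + 1)) ∧
      (∀ i, i < N → ∀ d, c i < d → d ≤ c (i + 1) →
        (v d - v (c i)).arg ≤ (v (c (i + 1)) - v (c i)).arg) ∧
      (∀ i j, i < j → j < N →
        (v (c (j + 1)) - v (c j)).arg < (v (c (i + 1)) - v (c i)).arg) := by
  -- finiteness of values of v on up-sets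
  have hfin : ∀ a : α, Set.Finite (v '' Set.Ici a) := by
    intro a
    refine wfgt.induction (C := fun a => Set.Finite (v '' Set.Ici a)) a ?_
    intro x IH
    by_cases hx : x = ⊤
    · subst hx
      rw [Set.Ici_top, Set.image_singleton]
      exact Set.finite_singleton _
    · have hxt : x < ⊤ := lt_top_iff_ne_top.mpr hx
      obtain ⟨y, hy, hminy⟩ := wflt.has_min {b | x < b} ⟨⊤, hxt⟩
      have hyIH := IH y hy
      refine Set.Finite.subset (hyIH.union (hyIH.image (fun z => z + (v x - v y)))) ?_
      rintro _ ⟨b, hb, rfl⟩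
      have h1 : x ≤ b ⊓ y := le_inf hb hy.le
      have h2 : b ⊓ y = x ∨ b ⊓ y = y := by
        rcases eq_or_lt_of_le (inf_le_right : b ⊓ y ≤ y) with h | h
        · exact Or.inr h
        · refine Or.inl ?_
          by_contra hne
          exact hminy (b ⊓ y) (lt_of_le_of_ne h1 (Ne.symm hne)) h
      have hmem : v (b ⊔ y) ∈ v '' Set.Ici y := ⟨b ⊔ y, le_sup_right, rfl⟩
      have hm := hmod b y
      rcases h2 with h | h
      · right
        refine ⟨v (b ⊔ y), hmem, ?_⟩
        rw [h] at hm
        dsimp only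
        linear_combination hm
      · left
        rw [h] at hm
        have : v (b ⊔ y) = v b := by linear_combination hm
        rwa [this] at hmem
  -- existence of a "maximal destabilizing" element above any non-top element
  have hMDS : ∀ a : α, a < ⊤ → ∃ B, a < B ∧
      (∀ d, a < d → d ≤ B → (v d - v a).arg ≤ (v B - v a).arg) ∧
      (∀ c, B < c → (v c - v B).arg < (v B - v a).arg) := by
    intro a ha
    set S : Set ℝ := (fun b => (v b - v a).arg) '' {b | a < b} with hSdef
    have hSne : S.Nonempty := ⟨_, ⟨⊤, ha, rfl⟩⟩
    have hSfin : S.Finite := by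
      refine Set.Finite.subset ((hfin a).image (fun z => (z - v a).arg)) ?_
      rintro _ ⟨b, hb, rfl⟩
      exact ⟨v b, ⟨b, hb.le, rfl⟩, rfl⟩
    obtain ⟨m, hmS, hmax0⟩ := Set.Finite.exists_maximal hSfin hSne
    have hmax : ∀ x ∈ S, m ≤ x → m = x := fun x hx h => le_antisymm h (hmax0 hx h)
    have hmax' : ∀ x ∈ S, x ≤ m := by
      intro x hx
      by_contra hlt
      push_neg at hlt
      exact absurd (hmax x hx hlt.le) (ne_of_lt hlt)
    obtain ⟨b₀, hb₀, hb₀m⟩ := hmS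
    obtain ⟨B, hBmem, hBmax⟩ := wfgt.has_min {b | a < b ∧ (v b - v a).arg = m}
      ⟨b₀, hb₀, hb₀m⟩
    refine ⟨B, hBmem.1, ?_, ?_⟩
    · intro d hd hdB
      rw [hBmem.2]
      exact hmax' _ ⟨d, hd, rfl⟩
    · intro c hc
      by_contra hcon
      push_neg at hcon
      have hx := hv hBmem.1
      have hy := hv hc
      have hge := (seesaw_le hx hy hcon).1
      have hsum : v B - v a + (v c - v B) = v c - v a := by ring
      rw [hsum] at hge
      have hac : a < c := lt_trans hBmem.1 hc
      have heq : (v c - v a).arg = m :=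
        le_antisymm (hmax' _ ⟨c, hac, rfl⟩) (by rw [← hBmem.2]; exact hge)
      exact hBmax c ⟨hac, heq⟩ hc
  -- main recursion
  refine wfgt.induction (C := fun a => ∃ (N : ℕ) (c : ℕ → α), c 0 = a ∧ c N = ⊤ ∧
      (∀ i, i < N → c i < c (i + 1)) ∧
      (∀ i, i < N → ∀ d, c i < d → d ≤ c (i + 1) →
        (v d - v (c i)).arg ≤ (v (c (i + 1)) - v (c i)).arg) ∧
      (∀ i j, i < j → j < N →
        (v (c (j + 1)) - v (c j)).arg < (v (c (i + 1)) - v (c i)).arg)) a ?_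
  intro x IH
  by_cases hx : x = ⊤
  · refine ⟨0, fun _ => ⊤, by rw [hx], rfl, ?_, ?_, ?_⟩
    · intro i hi; omega
    · intro i hi; omega
    · intro i j hij hj; omega
  · obtain ⟨B, hB1, hB2, hB3⟩ := hMDS x (lt_top_iff_ne_top.mpr hx)
    obtain ⟨N, c, hc0, hcN, hlt, hss, hdec⟩ := IH B hB1
    refine ⟨N + 1, fun n => Nat.rec x (fun k _ => c k) n, rfl, hcN, ?_, ?_, ?_⟩
    · intro i hi
      match i with
      | 0 => show x < c 0; rw [hc0]; exact hB1
      | (k+1) => exact hlt k (by omega)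
    · intro i hi d h1 h2
      match i with
      | 0 =>
        show (v d - v x).arg ≤ (v (c 0) - v x).arg
        rw [hc0]
        refine hB2 d h1 ?_
        rw [← hc0]
        exact h2
      | (k+1) => exact hss k (by omega) d h1 h2
    · intro i j hij hj
      have hc1B : ∀ hN0 : 0 < N, B < c 1 := by
        intro hN0
        rw [← hc0]
        exact hlt 0 hN0
      match i, j with
      | 0, (k+1) =>
        show (v (c (k+1)) - v (c k)).arg < (v (c 0) - v x).arg
        rw [hc0]
        match k with
        | 0 => rw [hc0]; exact hB3 (c 1) (hc1B (by omega))
        | (l+1) =>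
          calc (v (c (l+1+1)) - v (c (l+1))).arg
              < (v (c 1) - v (c 0)).arg := hdec 0 (l+1) (by omega) (by omega)
            _ < (v B - v x).arg := by rw [hc0]; exact hB3 (c 1) (hc1B (by omega))
      | (l+1), (k+1) => exact hdec l k (by omega) (by omega)

end HNaux

/-- in a finite length abelian category (every object noetherian and
artinian), any stability function Z (additive on short exact sequences with values
in the semi-closed upper half plane on nonzero objects) automatically has the
Harder–Narasimhan property: every nonzero object admits a finite filtration with
semistable quotients of strictly decreasing phase.  Here the phase is encoded via
arg Z(E) ∈ (0, π], and semistability of F means arg Z(A) ≤ arg Z(F) for all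
nonzero subobjects A ⊆ F. -/
theorem stability_function_has_HN_property
    {𝒜 : Type*} [Category 𝒜] [Abelian 𝒜]
    (hnoeth : ∀ X : 𝒜, IsNoetherianObject X)
    (hartin : ∀ X : 𝒜, IsArtinianObject X)
    (Z : 𝒜 → ℂ)
    (hadd : ∀ S : ShortComplex 𝒜, S.ShortExact → Z S.X₂ = Z S.X₁ + Z S.X₃)
    (hH : ∀ E : 𝒜, ¬ IsZero E → Z E ≠ 0 ∧ 0 < Complex.arg (Z E))
    (E : 𝒜) (hE : ¬ IsZero E) :
    ∃ (N : ℕ) (obj : Fin (N + 1) → 𝒜)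
      (f : ∀ j : Fin N, obj j.castSucc ⟶ obj j.succ),
      IsZero (obj 0) ∧ obj (Fin.last N) = E ∧
      (∀ j, Mono (f j)) ∧
      (∀ j : Fin N,
        ¬ IsZero (cokernel (f j)) ∧
        (∀ (A : 𝒜) (g : A ⟶ cokernel (f j)), Mono g → ¬ IsZero A →
          Complex.arg (Z A) ≤ Complex.arg (Z (cokernel (f j))))) ∧
      (∀ j j' : Fin N, j < j' →
        Complex.arg (Z (cokernel (f j'))) < Complex.arg (Z (cokernel (f j)))) := by
  classical
  -- abbreviations for the Z-lemmas
  have Z_zero' : ∀ {X : 𝒜}, IsZero X → Z X = 0 := fun h => HNaux.Z_zero Z hadd h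
  have Z_iso' : ∀ {X Y : 𝒜}, (X ≅ Y) → Z X = Z Y := fun e => HNaux.Z_iso Z hadd e
  have Z_epi' : ∀ {X A : 𝒜} (p : X ⟶ A), Epi p → Z X = Z (kernel p) + Z A :=
    fun p hp => @HNaux.Z_epi _ _ _ Z hadd _ _ p hp
  -- the lattice valuation
  set v : Subobject E → ℂ := fun P => Z ((P : 𝒜)) with hv_def
  have wfgt : WellFounded ((· > ·) : Subobject E → Subobject E → Prop) := by
    haveI := hnoeth E; exact wellFounded_gt
  have wflt : WellFounded ((· < ·) : Subobject E → Subobject E → Prop) := by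
    haveI := hartin E; exact wellFounded_lt
  have Z_sub_eq : ∀ {P Q : Subobject E} (h : P ≤ Q),
      Z (cokernel (Subobject.ofLE P Q h)) = v Q - v P := by
    intro P Q h
    have := HNaux.Z_mono Z hadd (Subobject.ofLE P Q h)
    simp only [hv_def]
    linear_combination -this
  have coker_ne : ∀ {P Q : Subobject E} (h : P < Q),
      ¬ IsZero (cokernel (Subobject.ofLE P Q h.le)) := by
    intro P Q h hz
    have hπ : cokernel.π (Subobject.ofLE P Q h.le) = 0 := hz.eq_of_tgt _ _
    have hepi := CategoryTheory.Abelian.epi_of_cokernel_π_eq_zero _ hπ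
    have hiso : IsIso (Subobject.ofLE P Q h.le) := isIso_of_mono_of_epi _
    have hQP : Q ≤ P := Subobject.le_of_comm (inv (Subobject.ofLE P Q h.le))
      (by rw [IsIso.inv_comp_eq, Subobject.ofLE_arrow])
    exact absurd (le_antisymm h.le hQP) (ne_of_lt h)
  have hv : ∀ {P Q : Subobject E}, P < Q → HNaux.Pos (v Q - v P) := by
    intro P Q h
    rw [← Z_sub_eq h.le]
    exact hH _ (coker_ne h)
  have hmod' : ∀ A B : Subobject E, v (A ⊔ B) + v (A ⊓ B) = v A + v B := by
    intro A B
    have := HNaux.Z_modular Z hadd A B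
    simp only [hv_def]
    linear_combination this
  obtain ⟨N, c, hc0, hcN, hlt, hss, hdec⟩ := HNaux.abstract_HN v wfgt wflt hv hmod' ⊥
  -- N ≥ 1
  have hbotne : (⊥ : Subobject E) ≠ ⊤ := by
    intro h
    apply hE
    have e1 : IsZero ((⊥ : Subobject E) : 𝒜) :=
      IsZero.of_iso (isZero_zero 𝒜) Subobject.botCoeIsoZero
    rw [h] at e1
    exact IsZero.of_iso e1 (asIso (⊤ : Subobject E).arrow).symm
  have hN : 0 < N := by
    rcases Nat.eq_zero_or_pos N with h | h
    · exact absurd (by rw [← hc0, ← hcN, h]) hbotne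
    · exact h
  -- the objects of the filtration
  set u : ℕ → 𝒜 := fun n => ((c n : Subobject E) : 𝒜) with hu_def
  set obj : Fin (N + 1) → 𝒜 := fun j => if j.val = N then E else u j.val with hobj_def
  have hobj_cast : ∀ j : Fin N, obj j.castSucc = u j.val := by
    intro j
    simp only [hobj_def, Fin.coe_castSucc, if_neg (Nat.ne_of_lt j.isLt)]
  have hobj_succ_top : ∀ j : Fin N, j.val + 1 = N → obj j.succ = E := by
    intro j h
    simp only [hobj_def, Fin.val_succ, if_pos h]
  have hobj_succ_mid : ∀ j : Fin N, ¬(j.val + 1 = N) → obj j.succ = u (j.val + 1) := by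
    intro j h
    simp only [hobj_def, Fin.val_succ, if_neg h]
  set g : ∀ j : Fin N, u j.val ⟶ u (j.val + 1) :=
    fun j => Subobject.ofLE _ _ (hlt j.val j.isLt).le with hg_def
  set e : ∀ j : Fin N, u (j.val + 1) ⟶ obj j.succ := fun j =>
    if h : j.val + 1 = N then
      eqToHom (show u (j.val + 1) = ((⊤ : Subobject E) : 𝒜) from
        congrArg (fun P : Subobject E => (P : 𝒜)) ((congrArg c h).trans hcN))
        ≫ (⊤ : Subobject E).arrow ≫ eqToHom (hobj_succ_top j h).symm
    else eqToHom (hobj_succ_mid j h).symm with he_def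
  have he : ∀ j : Fin N, IsIso (e j) := by
    intro j
    by_cases h : j.val + 1 = N
    · simp only [he_def, dif_pos h]; infer_instance
    · simp only [he_def, dif_neg h]; infer_instance
  set f : ∀ j : Fin N, obj j.castSucc ⟶ obj j.succ :=
    fun j => eqToHom (hobj_cast j) ≫ g j ≫ e j with hf_def
  have hκ : ∀ j : Fin N, Nonempty (cokernel (f j) ≅ cokernel (g j)) := by
    intro j
    haveI := he j
    exact ⟨(cokernelEpiComp (eqToHom (hobj_cast j)) (g j ≫ e j)) ≪≫
      (cokernelCompIsIso (g j) (e j))⟩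
  have hZc : ∀ j : Fin N, Z (cokernel (f j)) = v (c (j.val + 1)) - v (c j.val) := by
    intro j
    rw [Z_iso' (hκ j).some]
    simp only [hg_def]
    exact Z_sub_eq _
  refine ⟨N, obj, f, ?_, ?_, ?_, ?_, ?_⟩
  · -- IsZero (obj 0)
    have h0 : obj 0 = u 0 := by
      simp only [hobj_def, Fin.val_zero]
      exact if_neg (by omega)
    rw [h0]
    show IsZero ((c 0 : Subobject E) : 𝒜)
    rw [hc0]
    exact IsZero.of_iso (isZero_zero 𝒜) Subobject.botCoeIsoZero
  · -- obj last = E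
    simp only [hobj_def, Fin.val_last]
    simp only [if_true]
  · -- monos
    intro j
    haveI := he j
    simp only [hf_def]
    infer_instance
  · -- semistability of the factors
    intro j
    have hPos := hv (hlt j.val j.isLt)
    constructor
    · intro hz
      have : Z (cokernel (f j)) = 0 := Z_zero' hz
      rw [hZc j] at this
      exact hPos.1 this
    · intro A gm hgm hA
      haveI := hgm
      set Q' := cokernel (g j) with hQ'
      set gm' : A ⟶ Q' := gm ≫ (hκ j).some.hom with hgm'_def
      haveI : Mono gm' := mono_comp _ _
      set π : u (j.val + 1) ⟶ Q' := cokernel.π (g j) with hπ_def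
      haveI : Epi π := by rw [hπ_def]; infer_instance
      have hpb : Z (pullback gm' π) = Z (kernel π) + Z A :=
        HNaux.Z_pullback Z (fun e => Z_iso' e) (fun p hp => Z_epi' p hp) π gm'
      have hker : Z (kernel π) = v (c j.val) := by
        rw [hπ_def]
        exact Z_iso' (HNaux.kerCokerIso (g j))
      haveI : Mono (pullback.snd gm' π ≫ (c (j.val + 1)).arrow) := mono_comp _ _
      set D : Subobject E := Subobject.mk (pullback.snd gm' π ≫ (c (j.val + 1)).arrow)
        with hD_def
      have hDle : D ≤ c (j.val + 1) := Subobject.mk_le_of_comm (pullback.snd gm' π) rfl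
      have hq0 : (0 : ((c j.val : Subobject E) : 𝒜) ⟶ A) ≫ gm' = g j ≫ π := by
        simp only [hg_def, hπ_def]
        rw [zero_comp, cokernel.condition]
      have hcD : c j.val ≤ D := by
        refine Subobject.le_mk_of_comm (pullback.lift 0 (g j) hq0) ?_
        rw [← Category.assoc, pullback.lift_snd]
        simp only [hg_def]
        rw [Subobject.ofLE_arrow]
      have hvD : v D = v (c j.val) + Z A := by
        have : v D = Z (pullback gm' π) := Z_iso' (Subobject.underlyingIso _)
        rw [this, hpb, hker]
      have hne : c j.val ≠ D := by
        intro hEq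
        have : v (c j.val) = v (c j.val) + Z A := by rw [hEq] at hvD ⊢; exact hvD
        exact (hH A hA).1 (left_eq_add.mp this)
      have hltD : c j.val < D := lt_of_le_of_ne hcD hne
      have := hss j.val j.isLt D hltD hDle
      have hZA : v D - v (c j.val) = Z A := by rw [hvD]; ring
      rw [hZA] at this
      rw [hZc j]
      exact this
  · -- strictly decreasing phases
    intro j j' hjj'
    rw [hZc j, hZc j']
    exact hdec j.val j'.val hjj' j'.isLt
end
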